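/- Let K be a nonempty closed convex subset of Euclidean space ℝ^N. Then K = ⋂_{y ∈ K} (y + T_K(y)), where T_K(y) := closure(⋃_{h>0} {h⁻¹ • (k − y) : k ∈ K}) is the tangent cone to K at y. That is, a point x ∈ ℝ^N belongs to K if and only if x − y ∈ T_K(y) for every y ∈ K. -/

import Mathlib

open Set RealInnerProductSpace

/-- A nonempty closed convex set `K ⊆ ℝ^N` equals the intersection
`⋂_{y ∈ K} (y + T_K(y))` of the translated tangent cones: a point `x` belongs to `K` if and
only if `x - y ∈ T_K(y)` for every `y ∈ K`, where
`T_K(y) = cl (⋃_{h>0} h⁻¹ • (K - y))`. -/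
theorem mem_closed_convex_iff_sub_mem_tangent_cone
    {N : ℕ} (K : Set (EuclideanSpace ℝ (Fin N))) (hne : K.Nonempty)
    (hcl : IsClosed K) (hconv : Convex ℝ K) (x : EuclideanSpace ℝ (Fin N)) :
    x ∈ K ↔ ∀ y ∈ K,
      x - y ∈ closure (⋃ h ∈ Set.Ioi (0:ℝ), (fun k => h⁻¹ • (k - y)) '' K) := by
  constructor
  · intro hx y hy
    apply subset_closure
    refine Set.mem_biUnion (show (1:ℝ) ∈ Set.Ioi 0 by norm_num) ?_
    exact ⟨x, hx, by simp⟩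
  · intro H
    -- take the projection of x onto K
    obtain ⟨v, hvK, hv⟩ := exists_norm_eq_iInf_of_complete_convex hne
      (hcl.isComplete) hconv x
    have hproj : ∀ w ∈ K, (inner ℝ (x - v) (w - v) : ℝ) ≤ 0 :=
      (norm_eq_iInf_iff_real_inner_le_zero hconv hvK).mp hv
    -- every element of the union has nonpositive inner product with x - v
    have hsub : (⋃ h ∈ Set.Ioi (0:ℝ), (fun k => h⁻¹ • (k - v)) '' K) ⊆
        {z | (inner ℝ (x - v) z : ℝ) ≤ 0} := by
      rintro z hz
      simp only [Set.mem_iUnion] at hz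
      obtain ⟨h, hh, k, hk, rfl⟩ := hz
      simp only [Set.mem_setOf_eq, real_inner_smul_right]
      exact mul_nonpos_of_nonneg_of_nonpos (inv_nonneg.mpr (le_of_lt hh)) (hproj k hk)
    have hclosed : IsClosed {z : EuclideanSpace ℝ (Fin N) | (inner ℝ (x - v) z : ℝ) ≤ 0} :=
      isClosed_le (Continuous.inner continuous_const continuous_id) continuous_const
    have hmem : x - v ∈ {z : EuclideanSpace ℝ (Fin N) | (inner ℝ (x - v) z : ℝ) ≤ 0} :=
      (hclosed.closure_subset_iff.mpr hsub) (H v hvK)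
    have : ‖x - v‖ ^ 2 ≤ 0 := by
      rw [← real_inner_self_eq_norm_sq]; exact hmem
    have hxv : x = v := by
      have : ‖x - v‖ = 0 := by nlinarith [norm_nonneg (x - v)]
      have := sub_eq_zero.mp (norm_eq_zero.mp this)
      exact this
    rw [hxv]; exact hvK
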